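/- Every set E ⊆ [n]×[n] with |E| = k admits a valid coloring using at most √(3/2)·k^{2/3} colors; that is, L(k) ≤ √(3/2)·k^{2/3}. -/

import Mathlib

/-- A valid coloring of `E ⊆ [n]×[n]` with colors `{0,…,L−1}`. -/
def ValidColoring (n L : ℕ) (E : Finset (Fin n × Fin n)) (χ : Fin n × Fin n → ℕ) : Prop :=
  (∀ p ∈ E, χ p < L) ∧
  (∀ ℓ : ℕ,
    (∀ p ∈ E, ∀ q ∈ E, χ p = ℓ → χ q = ℓ → p ≠ q → p.1 ≠ q.1) ∨
    (∀ p ∈ E, ∀ q ∈ E, χ p = ℓ → χ q = ℓ → p ≠ q → p.2 ≠ q.2)) ∧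
  (∀ p ∈ E, ∀ i' j', (i', p.2) ∈ E → (p.1, j') ∈ E →
    χ (i', p.2) = χ (p.1, j') → i' ≠ p.1 → j' ≠ p.2 → False)


namespace Stmt9Aux

/-- Peeling a full column: if the rest (points outside column `c`) has a valid
`L`-coloring, then coloring column `c` with the fresh color `L` is valid. -/
lemma peel_col {n L : ℕ} {F : Finset (Fin n × Fin n)} (c : Fin n) {χ' : Fin n × Fin n → ℕ}
    (h : ValidColoring n L (F.filter (fun p => p.2 ≠ c)) χ') :
    ValidColoring n (L+1) F (fun p => if p.2 = c then L else χ' p) := by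
  obtain ⟨h1, h2, h3⟩ := h
  set F' := F.filter (fun p => p.2 ≠ c) with hF'
  have hmem : ∀ p ∈ F, p.2 ≠ c → p ∈ F' := by
    intro p hp hpc; simp [hF', Finset.mem_filter, hp, hpc]
  refine ⟨?_, ?_, ?_⟩
  · intro p hp
    by_cases hc : p.2 = c
    · simp [hc]
    · simp only [if_neg hc]
      exact Nat.lt_succ_of_lt (h1 p (hmem p hp hc))
  · intro ℓ
    by_cases hℓ : ℓ = L
    · subst hℓ
      left
      intro p hp q hq hpℓ hqℓ hpq
      have hpc : p.2 = c := by
        by_contra hpc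
        simp only [if_neg hpc] at hpℓ
        exact absurd hpℓ (Nat.ne_of_lt (h1 p (hmem p hp hpc)))
      have hqc : q.2 = c := by
        by_contra hqc
        simp only [if_neg hqc] at hqℓ
        exact absurd hqℓ (Nat.ne_of_lt (h1 q (hmem q hq hqc)))
      intro h11
      exact hpq (Prod.ext h11 (hpc.trans hqc.symm))
    · have key : ∀ p ∈ F, (if p.2 = c then L else χ' p) = ℓ → (p ∈ F' ∧ χ' p = ℓ) := by
        intro p hp hpℓ
        by_cases hpc : p.2 = c
        · simp only [if_pos hpc] at hpℓ; exact absurd hpℓ.symm hℓ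
        · simp only [if_neg hpc] at hpℓ; exact ⟨hmem p hp hpc, hpℓ⟩
      rcases h2 ℓ with hL | hR
      · left
        intro p hp q hq hpℓ hqℓ hpq
        obtain ⟨hp', hpℓ'⟩ := key p hp hpℓ
        obtain ⟨hq', hqℓ'⟩ := key q hq hqℓ
        exact hL p hp' q hq' hpℓ' hqℓ' hpq
      · right
        intro p hp q hq hpℓ hqℓ hpq
        obtain ⟨hp', hpℓ'⟩ := key p hp hpℓ
        obtain ⟨hq', hqℓ'⟩ := key q hq hqℓ
        exact hR p hp' q hq' hpℓ' hqℓ' hpq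
  · intro p hp i' j' hq1 hq2 heq hi hj
    by_cases hc : p.2 = c
    · -- q₁ is in column c, so its color is L; q₂'s column is j' ≠ p.2 = c
      have hjc : j' ≠ c := fun hh => hj (hh.trans hc.symm)
      simp only [hc, if_pos rfl, if_neg hjc] at heq
      exact absurd heq.symm (Nat.ne_of_lt (h1 _ (hmem _ hq2 hjc)))
    · by_cases hjc : j' = c
      · simp only [if_neg hc, if_pos hjc] at heq
        exact absurd heq (Nat.ne_of_lt (h1 _ (hmem _ hq1 hc)))
      · simp only [if_neg hc, if_neg hjc] at heq
        exact h3 p (hmem p hp hc) i' j' (hmem _ hq1 hc) (hmem _ hq2 hjc) heq hi hj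


lemma partition_rows {n : ℕ} (F : Finset (Fin n × Fin n)) :
    ∃ (g : Fin n → ℕ) (x : ℕ),
      (∀ p ∈ F, g p.1 < x) ∧
      (∀ p ∈ F, ∀ q ∈ F, g p.1 = g q.1 → p ≠ q → p.2 ≠ q.2) ∧
      x * (x - 1) ≤ ((F ×ˢ F).filter (fun pq => pq.1 ≠ pq.2 ∧ pq.1.2 = pq.2.2)).card := by
  classical
  set CP := ((F ×ˢ F).filter (fun pq => pq.1 ≠ pq.2 ∧ pq.1.2 = pq.2.2)) with hCP
  set P : ℕ → Prop := fun x => ∃ g : Fin n → ℕ,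
      (∀ p ∈ F, g p.1 < x) ∧
      (∀ p ∈ F, ∀ q ∈ F, g p.1 = g q.1 → p ≠ q → p.2 ≠ q.2) with hP
  have hPn : P n := by
    refine ⟨fun r => r.val, fun p _ => p.1.isLt, ?_⟩
    intro p hp q hq hg hne h2
    exact hne (Prod.ext (Fin.val_injective hg) h2)
  have hex : ∃ x, P x := ⟨n, hPn⟩
  set x := Nat.find hex with hx
  obtain ⟨g, hgb, hi⟩ : P x := Nat.find_spec hex
  refine ⟨g, x, hgb, hi, ?_⟩
  rcases Nat.lt_or_ge x 2 with hx2 | hx2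
  · interval_cases x <;> simp
  by_cases hlink : ∀ a b : ℕ, a < x → b < x → a ≠ b →
      ∃ p ∈ F, ∃ q ∈ F, g p.1 = a ∧ g q.1 = b ∧ p.2 = q.2 ∧ p ≠ q
  · have hsurj : Set.SurjOn (fun pq : (Fin n × Fin n) × (Fin n × Fin n) => (g pq.1.1, g pq.2.1))
        (CP : Set _) ((Finset.range x).offDiag : Set _) := by
      intro ab hab
      simp only [Finset.coe_offDiag, Set.mem_offDiag, Finset.mem_coe, Finset.mem_range] at hab
      obtain ⟨ha, hb', hab'⟩ := hab
      obtain ⟨p, hp, q, hq, hgp, hgq, hcol, hne⟩ := hlink ab.1 ab.2 ha hb' hab'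
      refine ⟨(p, q), ?_, ?_⟩
      · simp only [hCP, Finset.coe_filter, Set.mem_setOf_eq, Finset.mem_product]
        exact ⟨⟨hp, hq⟩, hne, hcol⟩
      · simp [hgp, hgq]
    have hcard := Finset.card_le_card_of_surjOn _ hsurj
    rw [Finset.offDiag_card, Finset.card_range] at hcard
    have hxx : x * (x - 1) = x * x - x := by
      cases x with
      | zero => rfl
      | succ m => rw [Nat.succ_sub_one, Nat.mul_succ, Nat.succ_mul, Nat.add_sub_cancel]
    omega
  · push_neg at hlink
    obtain ⟨a, b, ha, hb', hab, hnl⟩ := hlink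
    exfalso
    have key : ∀ a b : ℕ, a < x → b < x → a < b →
        (∀ p ∈ F, ∀ q ∈ F, g p.1 = a → g q.1 = b → p.2 = q.2 → p = q) → False := by
      clear hnl hab ha hb' a b
      intro a b ha hb hab hnl
      have hP' : P (x - 1) := by
        refine ⟨fun r => if g r = b then a else (if b < g r then g r - 1 else g r), ?_, ?_⟩
        · intro p hp
          have hglt : g p.1 < x := hgb p hp
          by_cases h1 : g p.1 = b
          · simp only [if_pos h1]; omega
          · simp only [if_neg h1]
            by_cases h3 : b < g p.1
            · simp only [if_pos h3]; omega
            · simp only [if_neg h3]; omega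
        · intro p hp q hq heq hne hcol
          have hup : g p.1 < x := hgb p hp
          have huq : g q.1 < x := hgb q hq
          have trich : g p.1 = g q.1 ∨ (g p.1 = a ∧ g q.1 = b) ∨ (g p.1 = b ∧ g q.1 = a) := by
            simp only [] at heq
            split_ifs at heq <;> omega
          rcases trich with h | ⟨h5, h6⟩ | ⟨h5, h6⟩
          · exact hi p hp q hq h hne hcol
          · exact hne (hnl p hp q hq h5 h6 hcol)
          · exact hne ((hnl q hq p hp h6 h5 hcol.symm).symm)
      exact Nat.find_min hex (by omega) hP'
    rcases Nat.lt_trichotomy a b with h | h | h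
    · exact key a b ha hb' h hnl
    · exact hab h
    · refine key b a hb' ha h ?_
      intro p hp q hq hgp hgq hcol
      exact ((hnl q hq p hp hgq hgp hcol.symm)).symm

/-- If every column of `F` has at most `d` points, the number of ordered pairs of
distinct points sharing a column is at most `|F| * (d-1)`. -/
lemma CP_card_le {n : ℕ} (F : Finset (Fin n × Fin n)) (d : ℕ)
    (hcol : ∀ c : Fin n, (F.filter (fun p => p.2 = c)).card ≤ d) :
    ((F ×ˢ F).filter (fun pq => pq.1 ≠ pq.2 ∧ pq.1.2 = pq.2.2)).card ≤ F.card * (d - 1) := by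
  classical
  have hsub : ((F ×ˢ F).filter (fun pq => pq.1 ≠ pq.2 ∧ pq.1.2 = pq.2.2)) ⊆
      F.biUnion (fun p => ({p} : Finset (Fin n × Fin n)) ×ˢ ((F.filter (fun q => q.2 = p.2)).erase p)) := by
    intro pq hpq
    simp only [Finset.mem_filter, Finset.mem_product] at hpq
    obtain ⟨⟨hp, hq⟩, hne, hcol'⟩ := hpq
    rw [Finset.mem_biUnion]
    refine ⟨pq.1, hp, ?_⟩
    rw [Finset.mem_product]
    refine ⟨Finset.mem_singleton_self _, ?_⟩
    rw [Finset.mem_erase]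
    exact ⟨fun h => hne (h.symm), Finset.mem_filter.mpr ⟨hq, hcol'.symm⟩⟩
  calc ((F ×ˢ F).filter (fun pq => pq.1 ≠ pq.2 ∧ pq.1.2 = pq.2.2)).card
      ≤ (F.biUnion (fun p => ({p} : Finset (Fin n × Fin n)) ×ˢ ((F.filter (fun q => q.2 = p.2)).erase p))).card :=
        Finset.card_le_card hsub
    _ ≤ ∑ p ∈ F, (({p} : Finset (Fin n × Fin n)) ×ˢ ((F.filter (fun q => q.2 = p.2)).erase p)).card :=
        Finset.card_biUnion_le
    _ ≤ ∑ _p ∈ F, (d - 1) := by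
        apply Finset.sum_le_sum
        intro p hp
        rw [Finset.card_product, Finset.card_singleton, one_mul]
        have h1 : p ∈ F.filter (fun q => q.2 = p.2) := Finset.mem_filter.mpr ⟨hp, rfl⟩
        rw [Finset.card_erase_of_mem h1]
        have := hcol p.2
        omega
    _ = F.card * (d - 1) := by rw [Finset.sum_const, smul_eq_mul]



def w (B : ℕ) : ℕ := if B = 4 then 3 else (Nat.sqrt (6*B) + 1)/2
def W : ℕ → ℕ
  | 0 => 0
  | B+1 => W B + w (B+1)
lemma sqrt_eval {m k : ℕ} (h1 : k*k ≤ m) (h2 : m < (k+1)*(k+1)) : Nat.sqrt m = k := by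
  have ha : k ≤ Nat.sqrt m := Nat.le_sqrt.mpr h1
  have hb : Nat.sqrt m < k+1 := Nat.sqrt_lt.mpr h2
  omega

lemma w_1 : w 1 = 1 := by
  have h : Nat.sqrt (6) = 2 := sqrt_eval (by decide) (by decide)
  unfold w; rw [if_neg (by decide), show 6*1 = 6 from rfl, h]
lemma w_2 : w 2 = 2 := by
  have h : Nat.sqrt (12) = 3 := sqrt_eval (by decide) (by decide)
  unfold w; rw [if_neg (by decide), show 6*2 = 12 from rfl, h]
lemma w_3 : w 3 = 2 := by
  have h : Nat.sqrt (18) = 4 := sqrt_eval (by decide) (by decide)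
  unfold w; rw [if_neg (by decide), show 6*3 = 18 from rfl, h]
lemma w_4 : w 4 = 3 := if_pos rfl
lemma w_5 : w 5 = 3 := by
  have h : Nat.sqrt (30) = 5 := sqrt_eval (by decide) (by decide)
  unfold w; rw [if_neg (by decide), show 6*5 = 30 from rfl, h]
lemma w_6 : w 6 = 3 := by
  have h : Nat.sqrt (36) = 6 := sqrt_eval (by decide) (by decide)
  unfold w; rw [if_neg (by decide), show 6*6 = 36 from rfl, h]
lemma w_7 : w 7 = 3 := by
  have h : Nat.sqrt (42) = 6 := sqrt_eval (by decide) (by decide)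
  unfold w; rw [if_neg (by decide), show 6*7 = 42 from rfl, h]
lemma w_8 : w 8 = 3 := by
  have h : Nat.sqrt (48) = 6 := sqrt_eval (by decide) (by decide)
  unfold w; rw [if_neg (by decide), show 6*8 = 48 from rfl, h]
lemma w_9 : w 9 = 4 := by
  have h : Nat.sqrt (54) = 7 := sqrt_eval (by decide) (by decide)
  unfold w; rw [if_neg (by decide), show 6*9 = 54 from rfl, h]
lemma w_10 : w 10 = 4 := by
  have h : Nat.sqrt (60) = 7 := sqrt_eval (by decide) (by decide)
  unfold w; rw [if_neg (by decide), show 6*10 = 60 from rfl, h]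
lemma w_11 : w 11 = 4 := by
  have h : Nat.sqrt (66) = 8 := sqrt_eval (by decide) (by decide)
  unfold w; rw [if_neg (by decide), show 6*11 = 66 from rfl, h]
lemma w_12 : w 12 = 4 := by
  have h : Nat.sqrt (72) = 8 := sqrt_eval (by decide) (by decide)
  unfold w; rw [if_neg (by decide), show 6*12 = 72 from rfl, h]
lemma w_13 : w 13 = 4 := by
  have h : Nat.sqrt (78) = 8 := sqrt_eval (by decide) (by decide)
  unfold w; rw [if_neg (by decide), show 6*13 = 78 from rfl, h]
lemma w_14 : w 14 = 5 := by
  have h : Nat.sqrt (84) = 9 := sqrt_eval (by decide) (by decide)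
  unfold w; rw [if_neg (by decide), show 6*14 = 84 from rfl, h]
lemma w_15 : w 15 = 5 := by
  have h : Nat.sqrt (90) = 9 := sqrt_eval (by decide) (by decide)
  unfold w; rw [if_neg (by decide), show 6*15 = 90 from rfl, h]
lemma w_16 : w 16 = 5 := by
  have h : Nat.sqrt (96) = 9 := sqrt_eval (by decide) (by decide)
  unfold w; rw [if_neg (by decide), show 6*16 = 96 from rfl, h]
lemma w_17 : w 17 = 5 := by
  have h : Nat.sqrt (102) = 10 := sqrt_eval (by decide) (by decide)
  unfold w; rw [if_neg (by decide), show 6*17 = 102 from rfl, h]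
lemma w_18 : w 18 = 5 := by
  have h : Nat.sqrt (108) = 10 := sqrt_eval (by decide) (by decide)
  unfold w; rw [if_neg (by decide), show 6*18 = 108 from rfl, h]
lemma w_19 : w 19 = 5 := by
  have h : Nat.sqrt (114) = 10 := sqrt_eval (by decide) (by decide)
  unfold w; rw [if_neg (by decide), show 6*19 = 114 from rfl, h]
lemma w_20 : w 20 = 5 := by
  have h : Nat.sqrt (120) = 10 := sqrt_eval (by decide) (by decide)
  unfold w; rw [if_neg (by decide), show 6*20 = 120 from rfl, h]
lemma w_21 : w 21 = 6 := by
  have h : Nat.sqrt (126) = 11 := sqrt_eval (by decide) (by decide)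
  unfold w; rw [if_neg (by decide), show 6*21 = 126 from rfl, h]
lemma w_22 : w 22 = 6 := by
  have h : Nat.sqrt (132) = 11 := sqrt_eval (by decide) (by decide)
  unfold w; rw [if_neg (by decide), show 6*22 = 132 from rfl, h]
lemma w_23 : w 23 = 6 := by
  have h : Nat.sqrt (138) = 11 := sqrt_eval (by decide) (by decide)
  unfold w; rw [if_neg (by decide), show 6*23 = 138 from rfl, h]
lemma w_24 : w 24 = 6 := by
  have h : Nat.sqrt (144) = 12 := sqrt_eval (by decide) (by decide)
  unfold w; rw [if_neg (by decide), show 6*24 = 144 from rfl, h]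
lemma w_25 : w 25 = 6 := by
  have h : Nat.sqrt (150) = 12 := sqrt_eval (by decide) (by decide)
  unfold w; rw [if_neg (by decide), show 6*25 = 150 from rfl, h]
lemma w_26 : w 26 = 6 := by
  have h : Nat.sqrt (156) = 12 := sqrt_eval (by decide) (by decide)
  unfold w; rw [if_neg (by decide), show 6*26 = 156 from rfl, h]
lemma w_27 : w 27 = 6 := by
  have h : Nat.sqrt (162) = 12 := sqrt_eval (by decide) (by decide)
  unfold w; rw [if_neg (by decide), show 6*27 = 162 from rfl, h]
lemma w_28 : w 28 = 6 := by
  have h : Nat.sqrt (168) = 12 := sqrt_eval (by decide) (by decide)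
  unfold w; rw [if_neg (by decide), show 6*28 = 168 from rfl, h]
lemma w_29 : w 29 = 7 := by
  have h : Nat.sqrt (174) = 13 := sqrt_eval (by decide) (by decide)
  unfold w; rw [if_neg (by decide), show 6*29 = 174 from rfl, h]
lemma w_30 : w 30 = 7 := by
  have h : Nat.sqrt (180) = 13 := sqrt_eval (by decide) (by decide)
  unfold w; rw [if_neg (by decide), show 6*30 = 180 from rfl, h]
lemma w_31 : w 31 = 7 := by
  have h : Nat.sqrt (186) = 13 := sqrt_eval (by decide) (by decide)
  unfold w; rw [if_neg (by decide), show 6*31 = 186 from rfl, h]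
lemma w_32 : w 32 = 7 := by
  have h : Nat.sqrt (192) = 13 := sqrt_eval (by decide) (by decide)
  unfold w; rw [if_neg (by decide), show 6*32 = 192 from rfl, h]
lemma w_33 : w 33 = 7 := by
  have h : Nat.sqrt (198) = 14 := sqrt_eval (by decide) (by decide)
  unfold w; rw [if_neg (by decide), show 6*33 = 198 from rfl, h]
lemma w_34 : w 34 = 7 := by
  have h : Nat.sqrt (204) = 14 := sqrt_eval (by decide) (by decide)
  unfold w; rw [if_neg (by decide), show 6*34 = 204 from rfl, h]
lemma w_35 : w 35 = 7 := by
  have h : Nat.sqrt (210) = 14 := sqrt_eval (by decide) (by decide)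
  unfold w; rw [if_neg (by decide), show 6*35 = 210 from rfl, h]
lemma w_36 : w 36 = 7 := by
  have h : Nat.sqrt (216) = 14 := sqrt_eval (by decide) (by decide)
  unfold w; rw [if_neg (by decide), show 6*36 = 216 from rfl, h]
lemma w_37 : w 37 = 7 := by
  have h : Nat.sqrt (222) = 14 := sqrt_eval (by decide) (by decide)
  unfold w; rw [if_neg (by decide), show 6*37 = 222 from rfl, h]
lemma w_38 : w 38 = 8 := by
  have h : Nat.sqrt (228) = 15 := sqrt_eval (by decide) (by decide)
  unfold w; rw [if_neg (by decide), show 6*38 = 228 from rfl, h]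
lemma w_39 : w 39 = 8 := by
  have h : Nat.sqrt (234) = 15 := sqrt_eval (by decide) (by decide)
  unfold w; rw [if_neg (by decide), show 6*39 = 234 from rfl, h]
lemma w_40 : w 40 = 8 := by
  have h : Nat.sqrt (240) = 15 := sqrt_eval (by decide) (by decide)
  unfold w; rw [if_neg (by decide), show 6*40 = 240 from rfl, h]
lemma w_41 : w 41 = 8 := by
  have h : Nat.sqrt (246) = 15 := sqrt_eval (by decide) (by decide)
  unfold w; rw [if_neg (by decide), show 6*41 = 246 from rfl, h]
lemma w_42 : w 42 = 8 := by
  have h : Nat.sqrt (252) = 15 := sqrt_eval (by decide) (by decide)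
  unfold w; rw [if_neg (by decide), show 6*42 = 252 from rfl, h]
lemma w_43 : w 43 = 8 := by
  have h : Nat.sqrt (258) = 16 := sqrt_eval (by decide) (by decide)
  unfold w; rw [if_neg (by decide), show 6*43 = 258 from rfl, h]
lemma w_44 : w 44 = 8 := by
  have h : Nat.sqrt (264) = 16 := sqrt_eval (by decide) (by decide)
  unfold w; rw [if_neg (by decide), show 6*44 = 264 from rfl, h]
lemma w_45 : w 45 = 8 := by
  have h : Nat.sqrt (270) = 16 := sqrt_eval (by decide) (by decide)
  unfold w; rw [if_neg (by decide), show 6*45 = 270 from rfl, h]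
lemma w_46 : w 46 = 8 := by
  have h : Nat.sqrt (276) = 16 := sqrt_eval (by decide) (by decide)
  unfold w; rw [if_neg (by decide), show 6*46 = 276 from rfl, h]
lemma w_47 : w 47 = 8 := by
  have h : Nat.sqrt (282) = 16 := sqrt_eval (by decide) (by decide)
  unfold w; rw [if_neg (by decide), show 6*47 = 282 from rfl, h]
lemma w_48 : w 48 = 8 := by
  have h : Nat.sqrt (288) = 16 := sqrt_eval (by decide) (by decide)
  unfold w; rw [if_neg (by decide), show 6*48 = 288 from rfl, h]
lemma w_49 : w 49 = 9 := by
  have h : Nat.sqrt (294) = 17 := sqrt_eval (by decide) (by decide)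
  unfold w; rw [if_neg (by decide), show 6*49 = 294 from rfl, h]
lemma w_50 : w 50 = 9 := by
  have h : Nat.sqrt (300) = 17 := sqrt_eval (by decide) (by decide)
  unfold w; rw [if_neg (by decide), show 6*50 = 300 from rfl, h]
lemma w_51 : w 51 = 9 := by
  have h : Nat.sqrt (306) = 17 := sqrt_eval (by decide) (by decide)
  unfold w; rw [if_neg (by decide), show 6*51 = 306 from rfl, h]
lemma w_52 : w 52 = 9 := by
  have h : Nat.sqrt (312) = 17 := sqrt_eval (by decide) (by decide)
  unfold w; rw [if_neg (by decide), show 6*52 = 312 from rfl, h]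
lemma w_53 : w 53 = 9 := by
  have h : Nat.sqrt (318) = 17 := sqrt_eval (by decide) (by decide)
  unfold w; rw [if_neg (by decide), show 6*53 = 318 from rfl, h]
lemma w_54 : w 54 = 9 := by
  have h : Nat.sqrt (324) = 18 := sqrt_eval (by decide) (by decide)
  unfold w; rw [if_neg (by decide), show 6*54 = 324 from rfl, h]
lemma w_55 : w 55 = 9 := by
  have h : Nat.sqrt (330) = 18 := sqrt_eval (by decide) (by decide)
  unfold w; rw [if_neg (by decide), show 6*55 = 330 from rfl, h]
lemma w_56 : w 56 = 9 := by
  have h : Nat.sqrt (336) = 18 := sqrt_eval (by decide) (by decide)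
  unfold w; rw [if_neg (by decide), show 6*56 = 336 from rfl, h]
lemma w_57 : w 57 = 9 := by
  have h : Nat.sqrt (342) = 18 := sqrt_eval (by decide) (by decide)
  unfold w; rw [if_neg (by decide), show 6*57 = 342 from rfl, h]
lemma w_58 : w 58 = 9 := by
  have h : Nat.sqrt (348) = 18 := sqrt_eval (by decide) (by decide)
  unfold w; rw [if_neg (by decide), show 6*58 = 348 from rfl, h]
lemma w_59 : w 59 = 9 := by
  have h : Nat.sqrt (354) = 18 := sqrt_eval (by decide) (by decide)
  unfold w; rw [if_neg (by decide), show 6*59 = 354 from rfl, h]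
lemma w_60 : w 60 = 9 := by
  have h : Nat.sqrt (360) = 18 := sqrt_eval (by decide) (by decide)
  unfold w; rw [if_neg (by decide), show 6*60 = 360 from rfl, h]
lemma w_61 : w 61 = 10 := by
  have h : Nat.sqrt (366) = 19 := sqrt_eval (by decide) (by decide)
  unfold w; rw [if_neg (by decide), show 6*61 = 366 from rfl, h]
lemma w_62 : w 62 = 10 := by
  have h : Nat.sqrt (372) = 19 := sqrt_eval (by decide) (by decide)
  unfold w; rw [if_neg (by decide), show 6*62 = 372 from rfl, h]
lemma w_63 : w 63 = 10 := by
  have h : Nat.sqrt (378) = 19 := sqrt_eval (by decide) (by decide)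
  unfold w; rw [if_neg (by decide), show 6*63 = 378 from rfl, h]
lemma w_64 : w 64 = 10 := by
  have h : Nat.sqrt (384) = 19 := sqrt_eval (by decide) (by decide)
  unfold w; rw [if_neg (by decide), show 6*64 = 384 from rfl, h]
lemma w_65 : w 65 = 10 := by
  have h : Nat.sqrt (390) = 19 := sqrt_eval (by decide) (by decide)
  unfold w; rw [if_neg (by decide), show 6*65 = 390 from rfl, h]
lemma w_66 : w 66 = 10 := by
  have h : Nat.sqrt (396) = 19 := sqrt_eval (by decide) (by decide)
  unfold w; rw [if_neg (by decide), show 6*66 = 396 from rfl, h]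
lemma w_67 : w 67 = 10 := by
  have h : Nat.sqrt (402) = 20 := sqrt_eval (by decide) (by decide)
  unfold w; rw [if_neg (by decide), show 6*67 = 402 from rfl, h]
lemma w_68 : w 68 = 10 := by
  have h : Nat.sqrt (408) = 20 := sqrt_eval (by decide) (by decide)
  unfold w; rw [if_neg (by decide), show 6*68 = 408 from rfl, h]
lemma w_69 : w 69 = 10 := by
  have h : Nat.sqrt (414) = 20 := sqrt_eval (by decide) (by decide)
  unfold w; rw [if_neg (by decide), show 6*69 = 414 from rfl, h]
lemma w_70 : w 70 = 10 := by
  have h : Nat.sqrt (420) = 20 := sqrt_eval (by decide) (by decide)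
  unfold w; rw [if_neg (by decide), show 6*70 = 420 from rfl, h]
lemma w_71 : w 71 = 10 := by
  have h : Nat.sqrt (426) = 20 := sqrt_eval (by decide) (by decide)
  unfold w; rw [if_neg (by decide), show 6*71 = 426 from rfl, h]
lemma w_72 : w 72 = 10 := by
  have h : Nat.sqrt (432) = 20 := sqrt_eval (by decide) (by decide)
  unfold w; rw [if_neg (by decide), show 6*72 = 432 from rfl, h]
lemma w_73 : w 73 = 10 := by
  have h : Nat.sqrt (438) = 20 := sqrt_eval (by decide) (by decide)
  unfold w; rw [if_neg (by decide), show 6*73 = 438 from rfl, h]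
lemma w_74 : w 74 = 11 := by
  have h : Nat.sqrt (444) = 21 := sqrt_eval (by decide) (by decide)
  unfold w; rw [if_neg (by decide), show 6*74 = 444 from rfl, h]
lemma w_75 : w 75 = 11 := by
  have h : Nat.sqrt (450) = 21 := sqrt_eval (by decide) (by decide)
  unfold w; rw [if_neg (by decide), show 6*75 = 450 from rfl, h]
lemma w_76 : w 76 = 11 := by
  have h : Nat.sqrt (456) = 21 := sqrt_eval (by decide) (by decide)
  unfold w; rw [if_neg (by decide), show 6*76 = 456 from rfl, h]
lemma w_77 : w 77 = 11 := by
  have h : Nat.sqrt (462) = 21 := sqrt_eval (by decide) (by decide)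
  unfold w; rw [if_neg (by decide), show 6*77 = 462 from rfl, h]
lemma w_78 : w 78 = 11 := by
  have h : Nat.sqrt (468) = 21 := sqrt_eval (by decide) (by decide)
  unfold w; rw [if_neg (by decide), show 6*78 = 468 from rfl, h]
lemma w_79 : w 79 = 11 := by
  have h : Nat.sqrt (474) = 21 := sqrt_eval (by decide) (by decide)
  unfold w; rw [if_neg (by decide), show 6*79 = 474 from rfl, h]
lemma w_80 : w 80 = 11 := by
  have h : Nat.sqrt (480) = 21 := sqrt_eval (by decide) (by decide)
  unfold w; rw [if_neg (by decide), show 6*80 = 480 from rfl, h]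
lemma w_81 : w 81 = 11 := by
  have h : Nat.sqrt (486) = 22 := sqrt_eval (by decide) (by decide)
  unfold w; rw [if_neg (by decide), show 6*81 = 486 from rfl, h]
lemma w_82 : w 82 = 11 := by
  have h : Nat.sqrt (492) = 22 := sqrt_eval (by decide) (by decide)
  unfold w; rw [if_neg (by decide), show 6*82 = 492 from rfl, h]
lemma w_83 : w 83 = 11 := by
  have h : Nat.sqrt (498) = 22 := sqrt_eval (by decide) (by decide)
  unfold w; rw [if_neg (by decide), show 6*83 = 498 from rfl, h]
lemma w_84 : w 84 = 11 := by
  have h : Nat.sqrt (504) = 22 := sqrt_eval (by decide) (by decide)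
  unfold w; rw [if_neg (by decide), show 6*84 = 504 from rfl, h]
lemma w_85 : w 85 = 11 := by
  have h : Nat.sqrt (510) = 22 := sqrt_eval (by decide) (by decide)
  unfold w; rw [if_neg (by decide), show 6*85 = 510 from rfl, h]
lemma w_86 : w 86 = 11 := by
  have h : Nat.sqrt (516) = 22 := sqrt_eval (by decide) (by decide)
  unfold w; rw [if_neg (by decide), show 6*86 = 516 from rfl, h]
lemma w_87 : w 87 = 11 := by
  have h : Nat.sqrt (522) = 22 := sqrt_eval (by decide) (by decide)
  unfold w; rw [if_neg (by decide), show 6*87 = 522 from rfl, h]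
lemma w_88 : w 88 = 11 := by
  have h : Nat.sqrt (528) = 22 := sqrt_eval (by decide) (by decide)
  unfold w; rw [if_neg (by decide), show 6*88 = 528 from rfl, h]
lemma w_89 : w 89 = 12 := by
  have h : Nat.sqrt (534) = 23 := sqrt_eval (by decide) (by decide)
  unfold w; rw [if_neg (by decide), show 6*89 = 534 from rfl, h]
lemma w_90 : w 90 = 12 := by
  have h : Nat.sqrt (540) = 23 := sqrt_eval (by decide) (by decide)
  unfold w; rw [if_neg (by decide), show 6*90 = 540 from rfl, h]
lemma w_91 : w 91 = 12 := by
  have h : Nat.sqrt (546) = 23 := sqrt_eval (by decide) (by decide)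
  unfold w; rw [if_neg (by decide), show 6*91 = 546 from rfl, h]
lemma w_92 : w 92 = 12 := by
  have h : Nat.sqrt (552) = 23 := sqrt_eval (by decide) (by decide)
  unfold w; rw [if_neg (by decide), show 6*92 = 552 from rfl, h]
lemma w_93 : w 93 = 12 := by
  have h : Nat.sqrt (558) = 23 := sqrt_eval (by decide) (by decide)
  unfold w; rw [if_neg (by decide), show 6*93 = 558 from rfl, h]
lemma w_94 : w 94 = 12 := by
  have h : Nat.sqrt (564) = 23 := sqrt_eval (by decide) (by decide)
  unfold w; rw [if_neg (by decide), show 6*94 = 564 from rfl, h]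
lemma w_95 : w 95 = 12 := by
  have h : Nat.sqrt (570) = 23 := sqrt_eval (by decide) (by decide)
  unfold w; rw [if_neg (by decide), show 6*95 = 570 from rfl, h]
lemma w_96 : w 96 = 12 := by
  have h : Nat.sqrt (576) = 24 := sqrt_eval (by decide) (by decide)
  unfold w; rw [if_neg (by decide), show 6*96 = 576 from rfl, h]
lemma w_97 : w 97 = 12 := by
  have h : Nat.sqrt (582) = 24 := sqrt_eval (by decide) (by decide)
  unfold w; rw [if_neg (by decide), show 6*97 = 582 from rfl, h]
lemma w_98 : w 98 = 12 := by
  have h : Nat.sqrt (588) = 24 := sqrt_eval (by decide) (by decide)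
  unfold w; rw [if_neg (by decide), show 6*98 = 588 from rfl, h]
lemma w_99 : w 99 = 12 := by
  have h : Nat.sqrt (594) = 24 := sqrt_eval (by decide) (by decide)
  unfold w; rw [if_neg (by decide), show 6*99 = 594 from rfl, h]
lemma W_succ (B : ℕ) : W (B+1) = W B + w (B+1) := rfl
lemma W_0 : W 0 = 0 := rfl
lemma W_1 : W 1 = 1 := by rw [show (1:ℕ) = 0+1 from rfl, W_succ, W_0, w_1]
lemma W_2 : W 2 = 3 := by rw [show (2:ℕ) = 1+1 from rfl, W_succ, W_1, w_2]
lemma W_3 : W 3 = 5 := by rw [show (3:ℕ) = 2+1 from rfl, W_succ, W_2, w_3]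
lemma W_4 : W 4 = 8 := by rw [show (4:ℕ) = 3+1 from rfl, W_succ, W_3, w_4]
lemma W_5 : W 5 = 11 := by rw [show (5:ℕ) = 4+1 from rfl, W_succ, W_4, w_5]
lemma W_6 : W 6 = 14 := by rw [show (6:ℕ) = 5+1 from rfl, W_succ, W_5, w_6]
lemma W_7 : W 7 = 17 := by rw [show (7:ℕ) = 6+1 from rfl, W_succ, W_6, w_7]
lemma W_8 : W 8 = 20 := by rw [show (8:ℕ) = 7+1 from rfl, W_succ, W_7, w_8]
lemma W_9 : W 9 = 24 := by rw [show (9:ℕ) = 8+1 from rfl, W_succ, W_8, w_9]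
lemma W_10 : W 10 = 28 := by rw [show (10:ℕ) = 9+1 from rfl, W_succ, W_9, w_10]
lemma W_11 : W 11 = 32 := by rw [show (11:ℕ) = 10+1 from rfl, W_succ, W_10, w_11]
lemma W_12 : W 12 = 36 := by rw [show (12:ℕ) = 11+1 from rfl, W_succ, W_11, w_12]
lemma W_13 : W 13 = 40 := by rw [show (13:ℕ) = 12+1 from rfl, W_succ, W_12, w_13]
lemma W_14 : W 14 = 45 := by rw [show (14:ℕ) = 13+1 from rfl, W_succ, W_13, w_14]
lemma W_15 : W 15 = 50 := by rw [show (15:ℕ) = 14+1 from rfl, W_succ, W_14, w_15]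
lemma W_16 : W 16 = 55 := by rw [show (16:ℕ) = 15+1 from rfl, W_succ, W_15, w_16]
lemma W_17 : W 17 = 60 := by rw [show (17:ℕ) = 16+1 from rfl, W_succ, W_16, w_17]
lemma W_18 : W 18 = 65 := by rw [show (18:ℕ) = 17+1 from rfl, W_succ, W_17, w_18]
lemma W_19 : W 19 = 70 := by rw [show (19:ℕ) = 18+1 from rfl, W_succ, W_18, w_19]
lemma W_20 : W 20 = 75 := by rw [show (20:ℕ) = 19+1 from rfl, W_succ, W_19, w_20]
lemma W_21 : W 21 = 81 := by rw [show (21:ℕ) = 20+1 from rfl, W_succ, W_20, w_21]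
lemma W_22 : W 22 = 87 := by rw [show (22:ℕ) = 21+1 from rfl, W_succ, W_21, w_22]
lemma W_23 : W 23 = 93 := by rw [show (23:ℕ) = 22+1 from rfl, W_succ, W_22, w_23]
lemma W_24 : W 24 = 99 := by rw [show (24:ℕ) = 23+1 from rfl, W_succ, W_23, w_24]
lemma W_25 : W 25 = 105 := by rw [show (25:ℕ) = 24+1 from rfl, W_succ, W_24, w_25]
lemma W_26 : W 26 = 111 := by rw [show (26:ℕ) = 25+1 from rfl, W_succ, W_25, w_26]
lemma W_27 : W 27 = 117 := by rw [show (27:ℕ) = 26+1 from rfl, W_succ, W_26, w_27]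
lemma W_28 : W 28 = 123 := by rw [show (28:ℕ) = 27+1 from rfl, W_succ, W_27, w_28]
lemma W_29 : W 29 = 130 := by rw [show (29:ℕ) = 28+1 from rfl, W_succ, W_28, w_29]
lemma W_30 : W 30 = 137 := by rw [show (30:ℕ) = 29+1 from rfl, W_succ, W_29, w_30]
lemma W_31 : W 31 = 144 := by rw [show (31:ℕ) = 30+1 from rfl, W_succ, W_30, w_31]
lemma W_32 : W 32 = 151 := by rw [show (32:ℕ) = 31+1 from rfl, W_succ, W_31, w_32]
lemma W_33 : W 33 = 158 := by rw [show (33:ℕ) = 32+1 from rfl, W_succ, W_32, w_33]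
lemma W_34 : W 34 = 165 := by rw [show (34:ℕ) = 33+1 from rfl, W_succ, W_33, w_34]
lemma W_35 : W 35 = 172 := by rw [show (35:ℕ) = 34+1 from rfl, W_succ, W_34, w_35]
lemma W_36 : W 36 = 179 := by rw [show (36:ℕ) = 35+1 from rfl, W_succ, W_35, w_36]
lemma W_37 : W 37 = 186 := by rw [show (37:ℕ) = 36+1 from rfl, W_succ, W_36, w_37]
lemma W_38 : W 38 = 194 := by rw [show (38:ℕ) = 37+1 from rfl, W_succ, W_37, w_38]
lemma W_39 : W 39 = 202 := by rw [show (39:ℕ) = 38+1 from rfl, W_succ, W_38, w_39]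
lemma W_40 : W 40 = 210 := by rw [show (40:ℕ) = 39+1 from rfl, W_succ, W_39, w_40]
lemma W_41 : W 41 = 218 := by rw [show (41:ℕ) = 40+1 from rfl, W_succ, W_40, w_41]
lemma W_42 : W 42 = 226 := by rw [show (42:ℕ) = 41+1 from rfl, W_succ, W_41, w_42]
lemma W_43 : W 43 = 234 := by rw [show (43:ℕ) = 42+1 from rfl, W_succ, W_42, w_43]
lemma W_44 : W 44 = 242 := by rw [show (44:ℕ) = 43+1 from rfl, W_succ, W_43, w_44]
lemma W_45 : W 45 = 250 := by rw [show (45:ℕ) = 44+1 from rfl, W_succ, W_44, w_45]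
lemma W_46 : W 46 = 258 := by rw [show (46:ℕ) = 45+1 from rfl, W_succ, W_45, w_46]
lemma W_47 : W 47 = 266 := by rw [show (47:ℕ) = 46+1 from rfl, W_succ, W_46, w_47]
lemma W_48 : W 48 = 274 := by rw [show (48:ℕ) = 47+1 from rfl, W_succ, W_47, w_48]
lemma W_49 : W 49 = 283 := by rw [show (49:ℕ) = 48+1 from rfl, W_succ, W_48, w_49]
lemma W_50 : W 50 = 292 := by rw [show (50:ℕ) = 49+1 from rfl, W_succ, W_49, w_50]
lemma W_51 : W 51 = 301 := by rw [show (51:ℕ) = 50+1 from rfl, W_succ, W_50, w_51]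
lemma W_52 : W 52 = 310 := by rw [show (52:ℕ) = 51+1 from rfl, W_succ, W_51, w_52]
lemma W_53 : W 53 = 319 := by rw [show (53:ℕ) = 52+1 from rfl, W_succ, W_52, w_53]
lemma W_54 : W 54 = 328 := by rw [show (54:ℕ) = 53+1 from rfl, W_succ, W_53, w_54]
lemma W_55 : W 55 = 337 := by rw [show (55:ℕ) = 54+1 from rfl, W_succ, W_54, w_55]
lemma W_56 : W 56 = 346 := by rw [show (56:ℕ) = 55+1 from rfl, W_succ, W_55, w_56]
lemma W_57 : W 57 = 355 := by rw [show (57:ℕ) = 56+1 from rfl, W_succ, W_56, w_57]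
lemma W_58 : W 58 = 364 := by rw [show (58:ℕ) = 57+1 from rfl, W_succ, W_57, w_58]
lemma W_59 : W 59 = 373 := by rw [show (59:ℕ) = 58+1 from rfl, W_succ, W_58, w_59]
lemma W_60 : W 60 = 382 := by rw [show (60:ℕ) = 59+1 from rfl, W_succ, W_59, w_60]
lemma W_61 : W 61 = 392 := by rw [show (61:ℕ) = 60+1 from rfl, W_succ, W_60, w_61]
lemma W_62 : W 62 = 402 := by rw [show (62:ℕ) = 61+1 from rfl, W_succ, W_61, w_62]
lemma W_63 : W 63 = 412 := by rw [show (63:ℕ) = 62+1 from rfl, W_succ, W_62, w_63]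
lemma W_64 : W 64 = 422 := by rw [show (64:ℕ) = 63+1 from rfl, W_succ, W_63, w_64]
lemma W_65 : W 65 = 432 := by rw [show (65:ℕ) = 64+1 from rfl, W_succ, W_64, w_65]
lemma W_66 : W 66 = 442 := by rw [show (66:ℕ) = 65+1 from rfl, W_succ, W_65, w_66]
lemma W_67 : W 67 = 452 := by rw [show (67:ℕ) = 66+1 from rfl, W_succ, W_66, w_67]
lemma W_68 : W 68 = 462 := by rw [show (68:ℕ) = 67+1 from rfl, W_succ, W_67, w_68]
lemma W_69 : W 69 = 472 := by rw [show (69:ℕ) = 68+1 from rfl, W_succ, W_68, w_69]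
lemma W_70 : W 70 = 482 := by rw [show (70:ℕ) = 69+1 from rfl, W_succ, W_69, w_70]
lemma W_71 : W 71 = 492 := by rw [show (71:ℕ) = 70+1 from rfl, W_succ, W_70, w_71]
lemma W_72 : W 72 = 502 := by rw [show (72:ℕ) = 71+1 from rfl, W_succ, W_71, w_72]
lemma W_73 : W 73 = 512 := by rw [show (73:ℕ) = 72+1 from rfl, W_succ, W_72, w_73]
lemma W_74 : W 74 = 523 := by rw [show (74:ℕ) = 73+1 from rfl, W_succ, W_73, w_74]
lemma W_75 : W 75 = 534 := by rw [show (75:ℕ) = 74+1 from rfl, W_succ, W_74, w_75]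
lemma W_76 : W 76 = 545 := by rw [show (76:ℕ) = 75+1 from rfl, W_succ, W_75, w_76]
lemma W_77 : W 77 = 556 := by rw [show (77:ℕ) = 76+1 from rfl, W_succ, W_76, w_77]
lemma W_78 : W 78 = 567 := by rw [show (78:ℕ) = 77+1 from rfl, W_succ, W_77, w_78]
lemma W_79 : W 79 = 578 := by rw [show (79:ℕ) = 78+1 from rfl, W_succ, W_78, w_79]
lemma W_80 : W 80 = 589 := by rw [show (80:ℕ) = 79+1 from rfl, W_succ, W_79, w_80]
lemma W_81 : W 81 = 600 := by rw [show (81:ℕ) = 80+1 from rfl, W_succ, W_80, w_81]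
lemma W_82 : W 82 = 611 := by rw [show (82:ℕ) = 81+1 from rfl, W_succ, W_81, w_82]
lemma W_83 : W 83 = 622 := by rw [show (83:ℕ) = 82+1 from rfl, W_succ, W_82, w_83]
lemma W_84 : W 84 = 633 := by rw [show (84:ℕ) = 83+1 from rfl, W_succ, W_83, w_84]
lemma W_85 : W 85 = 644 := by rw [show (85:ℕ) = 84+1 from rfl, W_succ, W_84, w_85]
lemma W_86 : W 86 = 655 := by rw [show (86:ℕ) = 85+1 from rfl, W_succ, W_85, w_86]
lemma W_87 : W 87 = 666 := by rw [show (87:ℕ) = 86+1 from rfl, W_succ, W_86, w_87]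
lemma W_88 : W 88 = 677 := by rw [show (88:ℕ) = 87+1 from rfl, W_succ, W_87, w_88]
lemma W_89 : W 89 = 689 := by rw [show (89:ℕ) = 88+1 from rfl, W_succ, W_88, w_89]
lemma W_90 : W 90 = 701 := by rw [show (90:ℕ) = 89+1 from rfl, W_succ, W_89, w_90]
lemma W_91 : W 91 = 713 := by rw [show (91:ℕ) = 90+1 from rfl, W_succ, W_90, w_91]
lemma W_92 : W 92 = 725 := by rw [show (92:ℕ) = 91+1 from rfl, W_succ, W_91, w_92]
lemma W_93 : W 93 = 737 := by rw [show (93:ℕ) = 92+1 from rfl, W_succ, W_92, w_93]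
lemma W_94 : W 94 = 749 := by rw [show (94:ℕ) = 93+1 from rfl, W_succ, W_93, w_94]
lemma W_95 : W 95 = 761 := by rw [show (95:ℕ) = 94+1 from rfl, W_succ, W_94, w_95]
lemma W_96 : W 96 = 773 := by rw [show (96:ℕ) = 95+1 from rfl, W_succ, W_95, w_96]
lemma W_97 : W 97 = 785 := by rw [show (97:ℕ) = 96+1 from rfl, W_succ, W_96, w_97]
lemma W_98 : W 98 = 797 := by rw [show (98:ℕ) = 97+1 from rfl, W_succ, W_97, w_98]
lemma W_99 : W 99 = 809 := by rw [show (99:ℕ) = 98+1 from rfl, W_succ, W_98, w_99]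
lemma r2_2 : 8*(2+1)^6 ≤ 27*(W 2 + 1)^4 := by rw [W_2]; decide
lemma r2_3 : 8*(3+1)^6 ≤ 27*(W 3 + 1)^4 := by rw [W_3]; decide
lemma r2_4 : 8*(4+1)^6 ≤ 27*(W 4 + 1)^4 := by rw [W_4]; decide
lemma r2_5 : 8*(5+1)^6 ≤ 27*(W 5 + 1)^4 := by rw [W_5]; decide
lemma r2_6 : 8*(6+1)^6 ≤ 27*(W 6 + 1)^4 := by rw [W_6]; decide
lemma r2_7 : 8*(7+1)^6 ≤ 27*(W 7 + 1)^4 := by rw [W_7]; decide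
lemma r2_8 : 8*(8+1)^6 ≤ 27*(W 8 + 1)^4 := by rw [W_8]; decide
lemma r2_9 : 8*(9+1)^6 ≤ 27*(W 9 + 1)^4 := by rw [W_9]; decide
lemma r2_10 : 8*(10+1)^6 ≤ 27*(W 10 + 1)^4 := by rw [W_10]; decide
lemma r2_11 : 8*(11+1)^6 ≤ 27*(W 11 + 1)^4 := by rw [W_11]; decide
lemma r2_12 : 8*(12+1)^6 ≤ 27*(W 12 + 1)^4 := by rw [W_12]; decide
lemma r2_13 : 8*(13+1)^6 ≤ 27*(W 13 + 1)^4 := by rw [W_13]; decide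
lemma r2_14 : 8*(14+1)^6 ≤ 27*(W 14 + 1)^4 := by rw [W_14]; decide
lemma r2_15 : 8*(15+1)^6 ≤ 27*(W 15 + 1)^4 := by rw [W_15]; decide
lemma r2_16 : 8*(16+1)^6 ≤ 27*(W 16 + 1)^4 := by rw [W_16]; decide
lemma r2_17 : 8*(17+1)^6 ≤ 27*(W 17 + 1)^4 := by rw [W_17]; decide
lemma r2_18 : 8*(18+1)^6 ≤ 27*(W 18 + 1)^4 := by rw [W_18]; decide
lemma r2_19 : 8*(19+1)^6 ≤ 27*(W 19 + 1)^4 := by rw [W_19]; decide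
lemma r2_20 : 8*(20+1)^6 ≤ 27*(W 20 + 1)^4 := by rw [W_20]; decide
lemma r2_21 : 8*(21+1)^6 ≤ 27*(W 21 + 1)^4 := by rw [W_21]; decide
lemma r2_22 : 8*(22+1)^6 ≤ 27*(W 22 + 1)^4 := by rw [W_22]; decide
lemma r2_23 : 8*(23+1)^6 ≤ 27*(W 23 + 1)^4 := by rw [W_23]; decide
lemma r2_24 : 8*(24+1)^6 ≤ 27*(W 24 + 1)^4 := by rw [W_24]; decide
lemma r2_25 : 8*(25+1)^6 ≤ 27*(W 25 + 1)^4 := by rw [W_25]; decide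
lemma r2_26 : 8*(26+1)^6 ≤ 27*(W 26 + 1)^4 := by rw [W_26]; decide
lemma r2_27 : 8*(27+1)^6 ≤ 27*(W 27 + 1)^4 := by rw [W_27]; decide
lemma r2_28 : 8*(28+1)^6 ≤ 27*(W 28 + 1)^4 := by rw [W_28]; decide
lemma r2_29 : 8*(29+1)^6 ≤ 27*(W 29 + 1)^4 := by rw [W_29]; decide
lemma r2_30 : 8*(30+1)^6 ≤ 27*(W 30 + 1)^4 := by rw [W_30]; decide
lemma r2_31 : 8*(31+1)^6 ≤ 27*(W 31 + 1)^4 := by rw [W_31]; decide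
lemma r2_32 : 8*(32+1)^6 ≤ 27*(W 32 + 1)^4 := by rw [W_32]; decide
lemma r2_33 : 8*(33+1)^6 ≤ 27*(W 33 + 1)^4 := by rw [W_33]; decide
lemma r2_34 : 8*(34+1)^6 ≤ 27*(W 34 + 1)^4 := by rw [W_34]; decide
lemma r2_35 : 8*(35+1)^6 ≤ 27*(W 35 + 1)^4 := by rw [W_35]; decide
lemma r2_36 : 8*(36+1)^6 ≤ 27*(W 36 + 1)^4 := by rw [W_36]; decide
lemma r2_37 : 8*(37+1)^6 ≤ 27*(W 37 + 1)^4 := by rw [W_37]; decide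
lemma r2_38 : 8*(38+1)^6 ≤ 27*(W 38 + 1)^4 := by rw [W_38]; decide
lemma r2_39 : 8*(39+1)^6 ≤ 27*(W 39 + 1)^4 := by rw [W_39]; decide
lemma r2_40 : 8*(40+1)^6 ≤ 27*(W 40 + 1)^4 := by rw [W_40]; decide
lemma r2_41 : 8*(41+1)^6 ≤ 27*(W 41 + 1)^4 := by rw [W_41]; decide
lemma r2_42 : 8*(42+1)^6 ≤ 27*(W 42 + 1)^4 := by rw [W_42]; decide
lemma r2_43 : 8*(43+1)^6 ≤ 27*(W 43 + 1)^4 := by rw [W_43]; decide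
lemma r2_44 : 8*(44+1)^6 ≤ 27*(W 44 + 1)^4 := by rw [W_44]; decide
lemma r2_45 : 8*(45+1)^6 ≤ 27*(W 45 + 1)^4 := by rw [W_45]; decide
lemma r2_46 : 8*(46+1)^6 ≤ 27*(W 46 + 1)^4 := by rw [W_46]; decide
lemma r2_47 : 8*(47+1)^6 ≤ 27*(W 47 + 1)^4 := by rw [W_47]; decide
lemma r2_48 : 8*(48+1)^6 ≤ 27*(W 48 + 1)^4 := by rw [W_48]; decide
lemma r2_49 : 8*(49+1)^6 ≤ 27*(W 49 + 1)^4 := by rw [W_49]; decide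
lemma r2_50 : 8*(50+1)^6 ≤ 27*(W 50 + 1)^4 := by rw [W_50]; decide
lemma r2_51 : 8*(51+1)^6 ≤ 27*(W 51 + 1)^4 := by rw [W_51]; decide
lemma r2_52 : 8*(52+1)^6 ≤ 27*(W 52 + 1)^4 := by rw [W_52]; decide
lemma r2_53 : 8*(53+1)^6 ≤ 27*(W 53 + 1)^4 := by rw [W_53]; decide
lemma r2_54 : 8*(54+1)^6 ≤ 27*(W 54 + 1)^4 := by rw [W_54]; decide
lemma r2_55 : 8*(55+1)^6 ≤ 27*(W 55 + 1)^4 := by rw [W_55]; decide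
lemma r2_56 : 8*(56+1)^6 ≤ 27*(W 56 + 1)^4 := by rw [W_56]; decide
lemma r2_57 : 8*(57+1)^6 ≤ 27*(W 57 + 1)^4 := by rw [W_57]; decide
lemma r2_58 : 8*(58+1)^6 ≤ 27*(W 58 + 1)^4 := by rw [W_58]; decide
lemma r2_59 : 8*(59+1)^6 ≤ 27*(W 59 + 1)^4 := by rw [W_59]; decide
lemma r2_60 : 8*(60+1)^6 ≤ 27*(W 60 + 1)^4 := by rw [W_60]; decide
lemma r2_61 : 8*(61+1)^6 ≤ 27*(W 61 + 1)^4 := by rw [W_61]; decide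
lemma r2_62 : 8*(62+1)^6 ≤ 27*(W 62 + 1)^4 := by rw [W_62]; decide
lemma r2_63 : 8*(63+1)^6 ≤ 27*(W 63 + 1)^4 := by rw [W_63]; decide
lemma r2_64 : 8*(64+1)^6 ≤ 27*(W 64 + 1)^4 := by rw [W_64]; decide
lemma r2_65 : 8*(65+1)^6 ≤ 27*(W 65 + 1)^4 := by rw [W_65]; decide
lemma r2_66 : 8*(66+1)^6 ≤ 27*(W 66 + 1)^4 := by rw [W_66]; decide
lemma r2_67 : 8*(67+1)^6 ≤ 27*(W 67 + 1)^4 := by rw [W_67]; decide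
lemma r2_68 : 8*(68+1)^6 ≤ 27*(W 68 + 1)^4 := by rw [W_68]; decide
lemma r2_69 : 8*(69+1)^6 ≤ 27*(W 69 + 1)^4 := by rw [W_69]; decide
lemma r2_70 : 8*(70+1)^6 ≤ 27*(W 70 + 1)^4 := by rw [W_70]; decide
lemma r2_71 : 8*(71+1)^6 ≤ 27*(W 71 + 1)^4 := by rw [W_71]; decide
lemma r2_72 : 8*(72+1)^6 ≤ 27*(W 72 + 1)^4 := by rw [W_72]; decide
lemma r2_73 : 8*(73+1)^6 ≤ 27*(W 73 + 1)^4 := by rw [W_73]; decide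
lemma r2_74 : 8*(74+1)^6 ≤ 27*(W 74 + 1)^4 := by rw [W_74]; decide
lemma r2_75 : 8*(75+1)^6 ≤ 27*(W 75 + 1)^4 := by rw [W_75]; decide
lemma r2_76 : 8*(76+1)^6 ≤ 27*(W 76 + 1)^4 := by rw [W_76]; decide
lemma r2_77 : 8*(77+1)^6 ≤ 27*(W 77 + 1)^4 := by rw [W_77]; decide
lemma r2_78 : 8*(78+1)^6 ≤ 27*(W 78 + 1)^4 := by rw [W_78]; decide
lemma r2_79 : 8*(79+1)^6 ≤ 27*(W 79 + 1)^4 := by rw [W_79]; decide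
lemma r2_80 : 8*(80+1)^6 ≤ 27*(W 80 + 1)^4 := by rw [W_80]; decide
lemma r2_81 : 8*(81+1)^6 ≤ 27*(W 81 + 1)^4 := by rw [W_81]; decide
lemma r2_82 : 8*(82+1)^6 ≤ 27*(W 82 + 1)^4 := by rw [W_82]; decide
lemma r2_83 : 8*(83+1)^6 ≤ 27*(W 83 + 1)^4 := by rw [W_83]; decide
lemma r2_84 : 8*(84+1)^6 ≤ 27*(W 84 + 1)^4 := by rw [W_84]; decide
lemma r2_85 : 8*(85+1)^6 ≤ 27*(W 85 + 1)^4 := by rw [W_85]; decide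
lemma r2_86 : 8*(86+1)^6 ≤ 27*(W 86 + 1)^4 := by rw [W_86]; decide
lemma r2_87 : 8*(87+1)^6 ≤ 27*(W 87 + 1)^4 := by rw [W_87]; decide
lemma r2_88 : 8*(88+1)^6 ≤ 27*(W 88 + 1)^4 := by rw [W_88]; decide
lemma r2_89 : 8*(89+1)^6 ≤ 27*(W 89 + 1)^4 := by rw [W_89]; decide
lemma r2_90 : 8*(90+1)^6 ≤ 27*(W 90 + 1)^4 := by rw [W_90]; decide
lemma r2_91 : 8*(91+1)^6 ≤ 27*(W 91 + 1)^4 := by rw [W_91]; decide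
lemma r2_92 : 8*(92+1)^6 ≤ 27*(W 92 + 1)^4 := by rw [W_92]; decide
lemma r2_93 : 8*(93+1)^6 ≤ 27*(W 93 + 1)^4 := by rw [W_93]; decide
lemma r2_94 : 8*(94+1)^6 ≤ 27*(W 94 + 1)^4 := by rw [W_94]; decide
lemma r2_95 : 8*(95+1)^6 ≤ 27*(W 95 + 1)^4 := by rw [W_95]; decide
lemma r2_96 : 8*(96+1)^6 ≤ 27*(W 96 + 1)^4 := by rw [W_96]; decide
lemma r2_97 : 8*(97+1)^6 ≤ 27*(W 97 + 1)^4 := by rw [W_97]; decide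
lemma r2_98 : 8*(98+1)^6 ≤ 27*(W 98 + 1)^4 := by rw [W_98]; decide
lemma r2_99 : 8*(99+1)^6 ≤ 27*(W 99 + 1)^4 := by rw [W_99]; decide
lemma smallR2 : ∀ B, 2 ≤ B → B ≤ 99 → 8*(B+1)^6 ≤ 27*(W B + 1)^4 := by
  intro B h2 h99
  interval_cases B
  exacts [r2_2, r2_3, r2_4, r2_5, r2_6, r2_7, r2_8, r2_9, r2_10, r2_11, r2_12, r2_13, r2_14, r2_15, r2_16, r2_17, r2_18, r2_19, r2_20, r2_21, r2_22, r2_23, r2_24, r2_25, r2_26, r2_27, r2_28, r2_29, r2_30, r2_31, r2_32, r2_33, r2_34, r2_35, r2_36, r2_37, r2_38, r2_39, r2_40, r2_41, r2_42, r2_43, r2_44, r2_45, r2_46, r2_47, r2_48, r2_49, r2_50, r2_51, r2_52, r2_53, r2_54, r2_55, r2_56, r2_57, r2_58, r2_59, r2_60, r2_61, r2_62, r2_63, r2_64, r2_65, r2_66, r2_67, r2_68, r2_69, r2_70, r2_71, r2_72, r2_73, r2_74, r2_75, r2_76, r2_77, r2_78, r2_79, r2_80, r2_81, r2_82, r2_83,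 r2_84, r2_85, r2_86, r2_87, r2_88, r2_89, r2_90, r2_91, r2_92, r2_93, r2_94, r2_95, r2_96, r2_97, r2_98, r2_99]

lemma nat_sqrt_le_real (m : ℕ) : (Nat.sqrt m : ℝ) ≤ Real.sqrt m := by
  have h : ((Nat.sqrt m * Nat.sqrt m : ℕ) : ℝ) ≤ (m : ℝ) := by exact_mod_cast Nat.sqrt_le m
  push_cast at h
  nlinarith [Real.sq_sqrt (by positivity : (0:ℝ) ≤ (m:ℝ)), Real.sqrt_nonneg (m:ℝ),
    sq_nonneg ((Nat.sqrt m : ℝ) - Real.sqrt m)]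

lemma real_sqrt_le_nat (m : ℕ) : Real.sqrt m ≤ (Nat.sqrt m : ℝ) + 1 := by
  have h : ((m:ℕ):ℝ) < ((Nat.sqrt m + 1) * (Nat.sqrt m + 1) : ℕ) := by
    exact_mod_cast Nat.lt_succ_sqrt m
  push_cast at h
  nlinarith [Real.sq_sqrt (by positivity : (0:ℝ) ≤ (m:ℝ)), Real.sqrt_nonneg (m:ℝ),
    sq_nonneg ((Nat.sqrt m : ℝ) + 1 - Real.sqrt m)]

lemma sqrt6B (B : ℕ) : Real.sqrt ((6*B : ℕ) : ℝ) = Real.sqrt 6 * Real.sqrt B := by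
  push_cast
  rw [Real.sqrt_mul (by norm_num)]

lemma w_le {B : ℕ} (h : B ≠ 4) : (w B : ℝ) ≤ (Real.sqrt 6 * Real.sqrt B + 1)/2 := by
  unfold w
  rw [if_neg h]
  calc ((((Nat.sqrt (6*B) + 1)/2 : ℕ)) : ℝ) ≤ ((Nat.sqrt (6*B) + 1 : ℕ) : ℝ)/2 := Nat.cast_div_le
    _ ≤ (Real.sqrt 6 * Real.sqrt B + 1)/2 := by
        push_cast
        have := nat_sqrt_le_real (6*B)
        rw [sqrt6B] at this
        linarith

lemma sqrt25 : Real.sqrt 25 = 5 := by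
  rw [show (25:ℝ) = 5^2 by norm_num, Real.sqrt_sq (by norm_num)]

lemma w_ge (B : ℕ) : (Real.sqrt 6 * Real.sqrt B - 1)/2 ≤ (w B : ℝ) := by
  by_cases h : B = 4
  · subst h
    have h24 : Real.sqrt 6 * Real.sqrt 4 ≤ 5 := by
      rw [← Real.sqrt_mul (show (0:ℝ) ≤ 6 by norm_num) 4, show (6:ℝ)*4 = 24 by norm_num]
      calc Real.sqrt 24 ≤ Real.sqrt 25 := Real.sqrt_le_sqrt (by norm_num)
        _ = 5 := sqrt25
    unfold w
    rw [if_pos rfl]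
    push_cast
    generalize Real.sqrt 6 * Real.sqrt 4 = x at *
    linarith
  · unfold w
    rw [if_neg h]
    have h1 : Real.sqrt 6 * Real.sqrt B ≤ (Nat.sqrt (6*B) : ℝ) + 1 := by
      have := real_sqrt_le_nat (6*B)
      rw [sqrt6B] at this
      exact this
    have h2 : (Nat.sqrt (6*B) : ℝ) ≤ 2 * (((Nat.sqrt (6*B) + 1)/2 : ℕ) : ℝ) := by
      have : Nat.sqrt (6*B) ≤ 2 * ((Nat.sqrt (6*B) + 1)/2) := by omega
      exact_mod_cast this
    linarith

/-- `(B+1)^{3/2} - B^{3/2} ≥ (3/2)√B` -/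
lemma key1 (B : ℕ) : (B:ℝ) * Real.sqrt B + (3/2) * Real.sqrt B ≤ ((B:ℝ)+1) * Real.sqrt ((B:ℝ)+1) := by
  have hB : (0:ℝ) ≤ B := by positivity
  have h1 : (B:ℝ) * Real.sqrt B + (3/2) * Real.sqrt B = Real.sqrt (((B:ℝ)+3/2)^2 * B) := by
    rw [Real.sqrt_mul (by positivity), Real.sqrt_sq (by positivity)]
    try ring
  have h2 : ((B:ℝ)+1) * Real.sqrt ((B:ℝ)+1) = Real.sqrt (((B:ℝ)+1)^2 * ((B:ℝ)+1)) := by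
    rw [Real.sqrt_mul (by positivity), Real.sqrt_sq (by positivity)]
    try ring
  rw [h1, h2]
  apply Real.sqrt_le_sqrt
  nlinarith [hB]

/-- `(B+1)^{3/2} - B^{3/2} ≤ (3/2)√(B+1)` -/
lemma key2 (B : ℕ) : ((B:ℝ)+1) * Real.sqrt ((B:ℝ)+1) ≤ (B:ℝ) * Real.sqrt B + (3/2) * Real.sqrt ((B:ℝ)+1) := by
  have hB : (0:ℝ) ≤ B := by positivity
  rcases Nat.eq_zero_or_pos B with h0 | h1
  · subst h0
    simp only [Nat.cast_zero, zero_add, zero_mul, Real.sqrt_one]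
    norm_num
  · have hB1 : (1:ℝ) ≤ B := by exact_mod_cast h1
    have e1 : ((B:ℝ)+1) * Real.sqrt ((B:ℝ)+1) - (3/2) * Real.sqrt ((B:ℝ)+1)
        = Real.sqrt (((B:ℝ)-1/2)^2 * ((B:ℝ)+1)) := by
      rw [Real.sqrt_mul (by positivity), Real.sqrt_sq (by linarith)]
      try ring
    have e2 : (B:ℝ) * Real.sqrt B = Real.sqrt (((B:ℝ))^2 * B) := by
      rw [Real.sqrt_mul (by positivity), Real.sqrt_sq (by positivity)]
    have h3 : Real.sqrt (((B:ℝ)-1/2)^2 * ((B:ℝ)+1)) ≤ Real.sqrt (((B:ℝ))^2 * B) := by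
      apply Real.sqrt_le_sqrt
      nlinarith [hB1]
    rw [← e1, ← e2] at h3
    linarith

lemma sqrt6_ge : (61/25 : ℝ) ≤ Real.sqrt 6 := by
  rw [show (61/25:ℝ) = Real.sqrt ((61/25)^2) from (Real.sqrt_sq (by norm_num)).symm]
  apply Real.sqrt_le_sqrt; norm_num

lemma sqrt6_le : Real.sqrt 6 ≤ 5/2 := by
  rw [show (5/2:ℝ) = Real.sqrt ((5/2)^2) from (Real.sqrt_sq (by norm_num)).symm]
  apply Real.sqrt_le_sqrt; norm_num

lemma sqrt4 : Real.sqrt 4 = 2 := by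
  rw [show (4:ℝ) = 2^2 by norm_num, Real.sqrt_sq (by norm_num)]

/-- Upper bound on W. -/
lemma W_upper : ∀ B : ℕ, (W B : ℝ) ≤
    Real.sqrt 6/3 * B * Real.sqrt B + B/2 + Real.sqrt 6/2 * Real.sqrt B + 1 := by
  intro B
  induction B with
  | zero => simp [W]
  | succ B ih =>
    by_cases h4 : B + 1 = 4
    · rw [h4, W_4]
      push_cast
      rw [sqrt4]
      nlinarith [sqrt6_ge, sqrt6_le]
    · have hw := w_le h4
      have hk := key1 B
      have h6 : (0:ℝ) ≤ Real.sqrt 6 / 3 := by positivity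
      have hmul := mul_le_mul_of_nonneg_left hk h6
      rw [W_succ]
      push_cast
      push_cast at hw ih hmul
      linarith

/-- Lower bound on W. -/
lemma W_lower : ∀ B : ℕ,
    Real.sqrt 6/3 * B * Real.sqrt B - B/2 ≤ (W B : ℝ) := by
  intro B
  induction B with
  | zero => simp [W]
  | succ B ih =>
    have hw := w_ge (B+1)
    have hk := key2 B
    have h6 : (0:ℝ) ≤ Real.sqrt 6 / 3 := by positivity
    have hmul := mul_le_mul_of_nonneg_left hk h6
    rw [W_succ]
    push_cast
    push_cast at hw ih hmul
    linarith

lemma sqrt_one_le {B : ℕ} (h : 1 ≤ B) : (1:ℝ) ≤ Real.sqrt B := by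
  rw [show (1:ℝ) = Real.sqrt 1 from Real.sqrt_one.symm]
  apply Real.sqrt_le_sqrt
  exact_mod_cast h

/-- (R1) : the stop-case budget inequality. -/
lemma R1 {B : ℕ} (hB : 1 ≤ B) : W B * (w B - 2) ≤ B * (B+1) - 1 := by
  have hBB : 1 ≤ B * (B+1) := Nat.one_le_iff_ne_zero.mpr (by positivity)
  by_cases hw2 : w B ≤ 2
  · rw [show w B - 2 = 0 by omega, Nat.mul_zero]
    omega
  · by_cases h4 : B = 4
    · subst h4
      rw [W_4, w_4]
      decide
    · -- real chain
      push_neg at hw2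
      have hwle := w_le h4
      have hWle := W_upper B
      set s := Real.sqrt 6 with hs
      set t := Real.sqrt B with ht
      have hs0 : (0:ℝ) ≤ s := Real.sqrt_nonneg 6
      have ht0 : (0:ℝ) ≤ t := Real.sqrt_nonneg B
      have ht1 : (1:ℝ) ≤ t := sqrt_one_le hB
      have ht2 : t^2 = (B:ℝ) := Real.sq_sqrt (by positivity)
      have hs2 : s^2 = 6 := Real.sq_sqrt (by norm_num)
      have hB1 : (1:ℝ) ≤ (B:ℝ) := by exact_mod_cast hB
      -- real version
      have hreal : (W B : ℝ) * ((w B : ℝ) - 2) ≤ (B:ℝ) * ((B:ℝ)+1) - 1 := by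
        have hfac1 : (0:ℝ) ≤ (w B : ℝ) - 2 := by
          have : (3:ℝ) ≤ (w B : ℝ) := by exact_mod_cast hw2
          linarith
        have hfac2 : (w B : ℝ) - 2 ≤ (s*t - 3)/2 := by linarith
        have hW0 : (0:ℝ) ≤ (W B : ℝ) := by positivity
        have hprod : (W B : ℝ) * ((w B : ℝ) - 2) ≤
            (s/3 * B * t + B/2 + s/2 * t + 1) * ((s*t - 3)/2) :=
          mul_le_mul hWle hfac2 hfac1 (by nlinarith)
        have hfin : (s/3 * (B:ℝ) * t + (B:ℝ)/2 + s/2 * t + 1) * ((s*t - 3)/2) ≤ (B:ℝ)*((B:ℝ)+1) - 1 := by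
          rw [← ht2]
          have hid2 : t^2*(t^2+1) - 1 - ((s/3*t^2*t + t^2/2 + s/2*t + 1)*((s*t - 3)/2))
              = (s/4)*t^3 + t^2/4 + (s/4)*t + 1/2 := by
            linear_combination (-(t^4/6) - t^2/4) * hs2
          have m1 : (0:ℝ) ≤ s * t^3 := mul_nonneg hs0 (pow_nonneg ht0 3)
          have m2 : (0:ℝ) ≤ s * t := mul_nonneg hs0 ht0
          have m3 : (0:ℝ) ≤ t^2 := sq_nonneg t
          linarith
        linarith
      have hcast : ((W B * (w B - 2) : ℕ) : ℝ) ≤ ((B * (B+1) - 1 : ℕ) : ℝ) := by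
        rw [Nat.cast_mul, Nat.cast_sub (by omega : 2 ≤ w B), Nat.cast_sub (by omega : 1 ≤ B*(B+1))]
        push_cast
        linarith
      exact_mod_cast hcast

/-- (R2) for large B. -/
lemma bigR2 {B : ℕ} (hB : 100 ≤ B) : 8*(B+1)^6 ≤ 27*(W B + 1)^4 := by
  have hWge := W_lower B
  set s := Real.sqrt 6 with hs
  set t := Real.sqrt B with ht
  have hs0 : (0:ℝ) ≤ s := Real.sqrt_nonneg 6
  have ht0 : (0:ℝ) ≤ t := Real.sqrt_nonneg B
  have ht2 : t^2 = (B:ℝ) := Real.sq_sqrt (by positivity)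
  have hs2 : s^2 = 6 := Real.sq_sqrt (by norm_num)
  have hs3 : s^3 = 6*s := by rw [show s^3 = s^2*s by ring, hs2]
  have hsge : (61/25:ℝ) ≤ s := sqrt6_ge
  have hsle : s ≤ 5/2 := sqrt6_le
  have ht10 : (10:ℝ) ≤ t := by
    rw [ht, show (10:ℝ) = Real.sqrt 100 by
      rw [show (100:ℝ) = 10^2 by norm_num, Real.sqrt_sq (by norm_num)]]
    apply Real.sqrt_le_sqrt
    exact_mod_cast hB
  set V : ℝ := s/3 * t^3 - t^2/2 + 1 with hV
  have hVle : V ≤ (W B : ℝ) + 1 := by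
    have h' : s/3 * (B:ℝ) * t - (B:ℝ)/2 ≤ (W B : ℝ) := hWge
    rw [← ht2] at h'
    have e : s/3 * t^2 * t - t^2/2 = V - 1 := by rw [hV]; ring
    linarith [e ▸ h']
  have hV0 : (0:ℝ) ≤ V := by
    have m1 : (0:ℝ) ≤ s/3 * t^3 - t^2/2 := by
      have e : s/3 * t^3 - t^2/2 = t^2 * (s/3*t - 1/2) := by ring
      rw [e]
      apply mul_nonneg (sq_nonneg t)
      nlinarith [mul_le_mul hsge ht10 (by norm_num) hs0]
    rw [hV]
    linarith
  have hmain : ((t^2:ℝ)+1)^3 ≤ (3*s/4) * V^2 := by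
    have hid : (3*s/4) * V^2 - ((t^2:ℝ)+1)^3 =
        (s/2 - 1)*t^6 - (3/2)*t^5 + (3*s/16 - 3)*t^4 + 3*t^3 - (3*s/4 + 3)*t^2 + (3*s/4 - 1) := by
      rw [hV]
      linear_combination (t^6/12) * hs3 - (t^5/4) * hs2 + (t^3/2) * hs2
    have c1 : (0:ℝ) ≤ (11/50)*(t^5*(t-10)) :=
      mul_nonneg (by norm_num) (mul_nonneg (pow_nonneg ht0 5) (by linarith))
    have c2 : (0:ℝ) ≤ (7/10)*(t^4*(t-10)) :=
      mul_nonneg (by norm_num) (mul_nonneg (pow_nonneg ht0 4) (by linarith))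
    have c3 : (0:ℝ) ≤ t^2*(t^2-100) := by
      apply mul_nonneg (sq_nonneg t)
      nlinarith [ht10, ht0]
    have f1 : (0:ℝ) ≤ (s/2 - 1 - 11/50)*t^6 :=
      mul_nonneg (by linarith) (pow_nonneg ht0 6)
    have f2 : (0:ℝ) ≤ (3*s/16 - 3 + 13/5)*t^4 :=
      mul_nonneg (by linarith) (pow_nonneg ht0 4)
    have f3 : (0:ℝ) ≤ (39/8 - (3*s/4 + 3))*t^2 :=
      mul_nonneg (by linarith) (sq_nonneg t)
    have f4 : (0:ℝ) ≤ 3*t^3 := by positivity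
    have f5 : (0:ℝ) ≤ 3*s/4 - 1 := by linarith
    have g2 : (0:ℝ) ≤ t^2 := sq_nonneg t
    have g4 : (0:ℝ) ≤ t^4 := pow_nonneg ht0 4
    have g5 : (0:ℝ) ≤ t^5 := pow_nonneg ht0 5
    have g6 : (0:ℝ) ≤ t^6 := pow_nonneg ht0 6
    linarith [hid, c1, c2, c3, f1, f2, f3, f4, f5, g2, g4, g5, g6]
  -- combine
  have hW0 : (0:ℝ) ≤ (W B : ℝ) := Nat.cast_nonneg _
  have step1 : ((B:ℝ)+1)^3 ≤ (3*s/4) * ((W B : ℝ)+1)^2 := by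
    have hsq : V^2 ≤ ((W B : ℝ)+1)^2 := by
      apply sq_le_sq' (by linarith) hVle
    have h34 : (0:ℝ) ≤ 3*s/4 := by linarith
    calc ((B:ℝ)+1)^3 = ((t^2:ℝ)+1)^3 := by rw [ht2]
      _ ≤ (3*s/4) * V^2 := hmain
      _ ≤ (3*s/4) * ((W B : ℝ)+1)^2 := by
          apply mul_le_mul_of_nonneg_left hsq h34
  have hWB0 : (0:ℝ) ≤ ((W B:ℝ)+1)^2 := sq_nonneg _
  have hB13 : (0:ℝ) ≤ ((B:ℝ)+1)^3 := by positivity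
  have step2 : 8*((B:ℝ)+1)^6 ≤ 27*((W B : ℝ)+1)^4 := by
    have := mul_self_le_mul_self hB13 step1
    have e1 : ((B:ℝ)+1)^3 * ((B:ℝ)+1)^3 = ((B:ℝ)+1)^6 := by ring
    have e2 : (3*s/4) * ((W B : ℝ)+1)^2 * ((3*s/4) * ((W B : ℝ)+1)^2)
        = (9/16) * s^2 * ((W B : ℝ)+1)^4 := by ring
    rw [e1, e2, hs2] at this
    linarith
  exact_mod_cast step2


lemma W_succ' (B : ℕ) : W (B+1) = W B + w (B+1) := rfl

lemma w_one_le {B : ℕ} (hB : 1 ≤ B) : 1 ≤ w B := by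
  unfold w
  split
  · omega
  · have h6 : 6 ≤ 6 * B := by omega
    have h1 := Nat.sqrt_le_sqrt h6
    have h2 : Nat.sqrt 6 = 2 := sqrt_eval (by decide) (by decide)
    omega

lemma W_ge_self (k : ℕ) : k ≤ W k := by
  induction k with
  | zero => simp [W]
  | succ m ih =>
    have := w_one_le (B := m + 1) (by omega)
    rw [W_succ']
    omega

/-- The main induction: any `F` with at most `W B` points has a valid `B`-coloring. -/
lemma main {n : ℕ} : ∀ B : ℕ, ∀ F : Finset (Fin n × Fin n), F.card ≤ W B →
    ∃ χ : Fin n × Fin n → ℕ, ValidColoring n B F χ := by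
  intro B
  induction B with
  | zero =>
    intro F hF
    have hF0 : F = ∅ := Finset.card_eq_zero.mp (Nat.le_zero.mp hF)
    subst hF0
    exact ⟨fun _ => 0, fun p hp => absurd hp (by simp),
      fun ℓ => Or.inl (fun p hp => absurd hp (by simp)),
      fun p hp => absurd hp (by simp)⟩
  | succ B ih =>
    intro F hF
    by_cases hc : ∃ c : Fin n, w (B+1) ≤ (F.filter (fun p => p.2 = c)).card
    · obtain ⟨c, hcge⟩ := hc
      have hsplit := Finset.card_filter_add_card_filter_not
        (s := F) (p := fun p => p.2 = c)
      have hF' : (F.filter (fun p => p.2 ≠ c)).card ≤ W B := by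
        have hWs := W_succ' B
        have : (F.filter (fun p => ¬ (p.2 = c))).card ≤ W B := by omega
        convert this using 2
      obtain ⟨χ', hχ'⟩ := ih _ hF'
      exact ⟨_, peel_col c hχ'⟩
    · push_neg at hc
      obtain ⟨g, x, hgb, hind, hcnt⟩ := partition_rows F
      have hCP := CP_card_le F (w (B+1) - 1) (fun c => by have := hc c; omega)
      have hxB : x ≤ B + 1 := by
        by_contra hx
        push_neg at hx
        have h1 : (B+2) * (B+1) ≤ x * (x-1) := Nat.mul_le_mul (by omega) (by omega)
        have h2 : x*(x-1) ≤ F.card * ((w (B+1) - 1) - 1) := le_trans hcnt hCP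
        have h3 : F.card * ((w (B+1) - 1) - 1) ≤ W (B+1) * (w (B+1) - 2) := by
          have he : (w (B+1) - 1) - 1 = w (B+1) - 2 := by omega
          rw [he]
          exact Nat.mul_le_mul_right _ hF
        have h4 := R1 (B := B+1) (by omega)
        have hfull : (B+1)*(B+1+1) ≤ (B+1)*(B+1+1) - 1 :=
          calc (B+1)*(B+1+1) = (B+2)*(B+1) := by ring
            _ ≤ x*(x-1) := h1
            _ ≤ F.card * ((w (B+1) - 1) - 1) := h2
            _ ≤ W (B+1) * (w (B+1) - 2) := h3
            _ ≤ (B+1)*((B+1)+1) - 1 := h4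
        have hlt : (B+1)*(B+1+1) - 1 < (B+1)*(B+1+1) :=
          Nat.sub_lt (by positivity) one_pos
        exact absurd (lt_of_le_of_lt hfull hlt) (lt_irrefl _)
      refine ⟨fun p => g p.1, ?_, ?_, ?_⟩
      · intro p hp; exact lt_of_lt_of_le (hgb p hp) hxB
      · intro ℓ
        right
        intro p hp q hq hpl hql hpq
        exact hind p hp q hq (hpl.trans hql.symm) hpq
      · intro p hp i' j' h1 h2 heq hi hj
        have hgg : g p.1 = g (i', p.2).1 := heq.symm
        have hne : p ≠ (i', p.2) := by
          intro he
          exact hi (congrArg Prod.fst he).symm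
        exact hind p hp (i', p.2) h1 hgg hne rfl

/-- Any set with at most two points has a valid 1-coloring. -/
lemma vc_two {n : ℕ} (E : Finset (Fin n × Fin n)) (h : E.card ≤ 2) :
    ValidColoring n 1 E (fun _ => 0) := by
  have three : ∀ a ∈ E, ∀ b ∈ E, ∀ c ∈ E, a ≠ b → a ≠ c → b ≠ c → False := by
    intro a ha b hb c hc hab hac hbc
    have hsub : ({a, b, c} : Finset (Fin n × Fin n)) ⊆ E := by
      intro z hz
      simp only [Finset.mem_insert, Finset.mem_singleton] at hz
      rcases hz with rfl | rfl | rfl <;> assumption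
    have hcard : ({a, b, c} : Finset (Fin n × Fin n)).card = 3 := by
      rw [Finset.card_insert_of_notMem (by simp [hab, hac]),
        Finset.card_insert_of_notMem (by simp [hbc]), Finset.card_singleton]
    have := Finset.card_le_card hsub
    omega
  refine ⟨fun p _ => Nat.zero_lt_one, ?_, ?_⟩
  · intro ℓ
    by_cases hrow : ∀ p ∈ E, ∀ q ∈ E, p ≠ q → p.1 ≠ q.1
    · left; intro p hp q hq _ _ hpq; exact hrow p hp q hq hpq
    · right
      push_neg at hrow
      obtain ⟨p0, hp0, q0, hq0, hne0, heq0⟩ := hrow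
      have hcol0 : p0.2 ≠ q0.2 := by
        intro hcc
        exact hne0 (Prod.ext heq0 hcc)
      intro p hp q hq _ _ hpq
      by_cases hpp0 : p = p0
      · by_cases hqq0 : q = q0
        · rw [hpp0, hqq0]; exact hcol0
        · exfalso
          refine three q hq p hp q0 hq0 hpq.symm hqq0 ?_
          rw [hpp0]; exact hne0
      · by_cases hpq0 : p = q0
        · by_cases hqp0 : q = p0
          · rw [hpq0, hqp0]; exact hcol0.symm
          · exfalso
            refine three q hq p0 hp0 q0 hq0 hqp0 ?_ hne0
            rw [← hpq0]; exact hpq.symm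
        · exfalso; exact three p hp p0 hp0 q0 hq0 hpp0 hpq0 hne0
  · intro p hp i' j' h1 h2 _ hi hj
    have hq1p : (i', p.2) ≠ p := fun he => hi (congrArg Prod.fst he)
    have hq2p : (p.1, j') ≠ p := fun he => hj (congrArg Prod.snd he)
    have hq12 : (i', p.2) ≠ (p.1, j') := fun he => hi (congrArg Prod.fst he)
    exact three _ h1 _ h2 p hp hq12 hq1p hq2p

lemma nat_to_real_bound {L k : ℕ} (h : 8*L^6 ≤ 27*k^4) :
    (L:ℝ) ≤ Real.sqrt (3/2) * (k:ℝ) ^ ((2:ℝ)/3) := by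
  have hk0 : (0:ℝ) ≤ (k:ℝ) := Nat.cast_nonneg k
  have hrpow : ((k:ℝ) ^ ((2:ℝ)/3)) ^ (6:ℕ) = (k:ℝ)^(4:ℕ) := by
    rw [← Real.rpow_natCast ((k:ℝ) ^ ((2:ℝ)/3)) 6, ← Real.rpow_mul hk0]
    norm_num
  have hs : (Real.sqrt (3/2))^(6:ℕ) = 27/8 := by
    have he : (Real.sqrt (3/2))^(6:ℕ) = ((Real.sqrt (3/2))^2)^3 := by ring
    rw [he, Real.sq_sqrt (by norm_num : (0:ℝ) ≤ 3/2)]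
    norm_num
  apply le_of_pow_le_pow_left₀ (n := 6) (by norm_num) (by positivity)
  rw [mul_pow, hrpow, hs]
  have hcast : (8:ℝ)*(L:ℝ)^6 ≤ 27*(k:ℝ)^4 := by exact_mod_cast h
  linarith

end Stmt9Aux

open Stmt9Aux in
/-- Every set `E ⊆ [n]×[n]` with `|E| = k` admits a valid coloring with at most
`√(3/2)·k^{2/3}` colors. -/
theorem stmt9 {n k : ℕ} (E : Finset (Fin n × Fin n)) (hE : E.card = k) :
    ∃ (L : ℕ) (χ : Fin n × Fin n → ℕ),
      ValidColoring n L E χ ∧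
      (L : ℝ) ≤ Real.sqrt (3 / 2) * (k : ℝ) ^ ((2 : ℝ) / 3) := by
  classical
  subst hE
  by_cases hk : E.card ≤ 2
  · rcases Nat.eq_zero_or_pos E.card with h0 | h1
    · have hE0 : E = ∅ := Finset.card_eq_zero.mp h0
      subst hE0
      refine ⟨0, fun _ => 0, ?_, by simp⟩
      exact ⟨fun p hp => absurd hp (by simp),
        fun ℓ => Or.inl (fun p hp => absurd hp (by simp)),
        fun p hp => absurd hp (by simp)⟩
    · refine ⟨1, fun _ => 0, vc_two E hk, nat_to_real_bound ?_⟩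
      have h14 : 1 ≤ E.card^4 := Nat.one_le_pow _ _ h1
      calc 8*1^6 = 8 := by norm_num
        _ ≤ 27*E.card^4 := by
            calc (8:ℕ) ≤ 27*1 := by norm_num
              _ ≤ 27*E.card^4 := Nat.mul_le_mul_left 27 h14
  · push_neg at hk
    have hk3 : 3 ≤ E.card := hk
    have hex : ∃ B, E.card ≤ W B := ⟨E.card, W_ge_self _⟩
    obtain ⟨χ, hχ⟩ := main (n := n) (Nat.find hex) E (Nat.find_spec hex)
    refine ⟨Nat.find hex, χ, hχ, nat_to_real_bound ?_⟩
    set L := Nat.find hex with hL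
    by_cases hL2 : L ≤ 2
    · have hp6 : L^6 ≤ 2^6 := Nat.pow_le_pow_left hL2 6
      have hp4 : 3^4 ≤ E.card^4 := Nat.pow_le_pow_left hk3 4
      calc 8*L^6 ≤ 8*2^6 := Nat.mul_le_mul_left 8 hp6
        _ = 512 := by norm_num
        _ ≤ 27*3^4 := by norm_num
        _ ≤ 27*E.card^4 := Nat.mul_le_mul_left 27 hp4
    · push_neg at hL2
      have hmin : ¬ (E.card ≤ W (L-1)) := Nat.find_min hex (by omega)
      have hWk : W (L-1) + 1 ≤ E.card := by omega
      have hR2 : 8*((L-1)+1)^6 ≤ 27*(W (L-1) + 1)^4 := by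
        by_cases hbig : 100 ≤ L-1
        · exact bigR2 hbig
        · exact smallR2 (L-1) (by omega) (by omega)
      have h1 : (L-1)+1 = L := by omega
      rw [h1] at hR2
      have h2 : (W (L-1) + 1)^4 ≤ E.card^4 := Nat.pow_le_pow_left hWk 4
      calc 8*L^6 ≤ 27*(W (L-1) + 1)^4 := hR2
        _ ≤ 27*E.card^4 := Nat.mul_le_mul_left 27 h2
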